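/- arXiv:1410.2420 — 3 statements merged into one kernel-verified Lean document; each statement's English description precedes it below -/
import Mathlib

section
/- Let p ≥ 11 be a prime and let a, b, c be nonzero elements of O_K, coprime in O_K, with a^p + b^p + c^p = 0. Suppose 2 divides a and 2 does not divide b·c. Set A = a^p, B = b^p, C = c^p, and let v denote the valuation on O_K attached to the prime ideal 2·O_K. Then v(16·(A² + A·B + B²)) = 4, v(−32·(A − B)·(B − C)·(C − A)) = 6, and v(16·(A·B·C)²) ≥ 26. -/
open Polynomial

open IntermediateField

/-- `K = ℚ(√5)`, the real quadratic field obtained by adjoining `√5` to `ℚ`. -/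
noncomputable def K : IntermediateField ℚ ℝ := IntermediateField.adjoin ℚ {Real.sqrt 5}

/-- `O_K`, the ring of integers of `K = ℚ(√5)`. -/
noncomputable abbrev OK : Type := NumberField.RingOfIntegers K

lemma sqrt5_irrational : Irrational (Real.sqrt 5) := by
  have h : Nat.Prime 5 := by norm_num
  simpa using h.irrational_sqrt

lemma sq_ne_five (q : ℚ) : q ^ 2 ≠ (5 : ℚ) := by
  intro h
  apply sqrt5_irrational
  refine ⟨|q|, ?_⟩
  have h2 : ((q : ℝ)) ^ 2 = 5 := by exact_mod_cast congrArg (fun x : ℚ => (x : ℝ)) h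
  have : Real.sqrt ((q:ℝ)^2) = |(q:ℝ)| := Real.sqrt_sq_eq_abs _
  rw [h2] at this
  rw [this, Rat.cast_abs]

lemma sqrt5_int : IsIntegral ℚ (Real.sqrt 5) := by
  refine ⟨X ^ 2 - C 5, ?_, ?_⟩
  · exact Polynomial.monic_X_pow_sub_C _ (by norm_num)
  · simp [Real.sq_sqrt (by norm_num : (5:ℝ) ≥ 0)]

lemma minpoly_sqrt5 : minpoly ℚ (Real.sqrt 5) = X ^ 2 - C 5 := by
  have hirr : Irreducible (X ^ 2 - C (5:ℚ)) :=
    X_pow_sub_C_irreducible_of_prime Nat.prime_two (fun b hb => sq_ne_five b hb)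
  refine (minpoly.eq_of_irreducible_of_monic hirr ?_ ?_).symm
  · simp [Real.sq_sqrt (by norm_num : (5:ℝ) ≥ 0)]
  · exact Polynomial.monic_X_pow_sub_C _ (by norm_num)

lemma finrank_K : Module.finrank ℚ K = 2 := by
  rw [show K = ℚ⟮Real.sqrt 5⟯ from rfl]
  rw [IntermediateField.adjoin.finrank sqrt5_int, minpoly_sqrt5]
  simp

instance : NumberField K where
  to_charZero := inferInstance
  to_finiteDimensional := IntermediateField.adjoin.finiteDimensional sqrt5_int

/-- `√5` as an element of `K`. -/
noncomputable def sqrt5K : K :=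
  ⟨Real.sqrt 5, IntermediateField.subset_adjoin ℚ {Real.sqrt 5} rfl⟩

lemma sqrt5K_sq : sqrt5K ^ 2 = 5 := by
  apply Subtype.ext
  push_cast [sqrt5K]
  exact Real.sq_sqrt (by norm_num)

/-- The golden-ratio-like element `(1 + √5)/2` of `K`. -/
noncomputable def thetaK : K := (1 + sqrt5K) / 2

lemma thetaK_rel : thetaK ^ 2 = thetaK + 1 := by
  have h5 := sqrt5K_sq
  unfold thetaK
  field_simp
  ring_nf
  nlinarith [h5]

/-- `(1+√5)/2` as an algebraic integer. -/
noncomputable def theta : OK :=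
  ⟨thetaK, ⟨X ^ 2 - X - 1, by
      have : (X ^ 2 - X - 1 : ℤ[X]) = X ^ 2 - (X + 1) := by ring
      rw [this]
      refine Polynomial.monic_X_pow_sub ?_
      refine lt_of_le_of_lt (by simpa using Polynomial.degree_linear_le (a := (1:ℤ)) (b := 1)) ?_
      decide,
    by
      have h := thetaK_rel
      simp only [eval₂_sub, eval₂_X_pow, eval₂_X, eval₂_one]
      rw [h]; ring⟩⟩

lemma theta_rel : theta ^ 2 = theta + 1 := by
  apply NumberField.RingOfIntegers.ext
  push_cast [theta, NumberField.RingOfIntegers.coe_mk]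
  exact thetaK_rel

lemma card_quot_two : Nat.card (OK ⧸ Ideal.span {(2:OK)}) = 4 := by
  have h1 : Ideal.absNorm (Ideal.span {(2:OK)}) = 4 := by
    rw [Ideal.absNorm_span_singleton]
    have h2 : (2 : OK) = algebraMap ℤ OK 2 := by simp
    let b := Module.Free.chooseBasis ℤ OK
    rw [h2, Algebra.norm_algebraMap_of_basis b]
    have hcard : Fintype.card (Module.Free.ChooseBasisIndex ℤ OK) = 2 := by
      rw [← Module.finrank_eq_card_chooseBasisIndex, NumberField.RingOfIntegers.rank, finrank_K]
    rw [hcard]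
    norm_num
  rwa [Ideal.absNorm_apply, Submodule.cardQuot_apply] at h1

set_option maxHeartbeats 1600000 in
set_option synthInstance.maxHeartbeats 1000000 in
lemma prime_two_OK : Prime (2 : OK) := by
  classical
  rw [← Ideal.span_singleton_prime (by norm_num : (2:OK) ≠ 0),
    ← Ideal.Quotient.isDomain_iff_prime]
  letI : Finite (OK ⧸ Ideal.span {(2:OK)}) :=
    Nat.finite_of_card_ne_zero (by rw [card_quot_two]; norm_num)
  letI := Fintype.ofFinite (OK ⧸ Ideal.span {(2:OK)})
  have hcard4' : Fintype.card (OK ⧸ Ideal.span {(2:OK)}) = 4 := by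
    rw [← Nat.card_eq_fintype_card]; exact card_quot_two
  haveI hnt : Nontrivial (OK ⧸ Ideal.span {(2:OK)}) :=
    Fintype.one_lt_card_iff_nontrivial.mp (by rw [hcard4']; norm_num)
  have h2R : (2 : OK ⧸ Ideal.span {(2:OK)}) = 0 := by
    rw [← map_ofNat (Ideal.Quotient.mk (Ideal.span {(2:OK)})) 2]
    exact Ideal.Quotient.eq_zero_iff_mem.mpr (Ideal.mem_span_singleton_self 2)
  have ht : (Ideal.Quotient.mk (Ideal.span {(2:OK)}) theta) ^ 2
      = Ideal.Quotient.mk (Ideal.span {(2:OK)}) theta + 1 := by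
    rw [← map_pow, theta_rel, map_add, map_one]
  generalize htdef : Ideal.Quotient.mk (Ideal.span {(2:OK)}) theta = t at ht
  -- distinctness
  have h01 : (0:OK ⧸ Ideal.span {(2:OK)}) ≠ 1 := zero_ne_one
  have h0t : (0:OK ⧸ Ideal.span {(2:OK)}) ≠ t := by
    intro h; exact one_ne_zero (α := OK ⧸ Ideal.span {(2:OK)}) (by linear_combination (1 - t) * h - ht)
  have h0t1 : (0:OK ⧸ Ideal.span {(2:OK)}) ≠ t + 1 := by
    intro h; exact one_ne_zero (α := OK ⧸ Ideal.span {(2:OK)}) (by linear_combination ht + (t - 2) * h)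
  have h1t : (1:OK ⧸ Ideal.span {(2:OK)}) ≠ t := by
    intro h; exact one_ne_zero (α := OK ⧸ Ideal.span {(2:OK)}) (by linear_combination - ht - t * h)
  have h1t1 : (1:OK ⧸ Ideal.span {(2:OK)}) ≠ t + 1 := by
    intro h; exact one_ne_zero (α := OK ⧸ Ideal.span {(2:OK)}) (by linear_combination - ht + (1 - t) * h)
  have htt1 : t ≠ t + 1 := by
    intro h; exact one_ne_zero (α := OK ⧸ Ideal.span {(2:OK)}) (by linear_combination - h)
  have hcard4 : Fintype.card (OK ⧸ Ideal.span {(2:OK)}) = 4 := hcard4'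
  have hs : ({0, 1, t, t+1} : Finset (OK ⧸ Ideal.span {(2:OK)})).card = 4 := by
    rw [Finset.card_insert_of_notMem (by simp [h01, h0t, h0t1]),
        Finset.card_insert_of_notMem (by simp [h1t, h1t1]),
        Finset.card_insert_of_notMem (by simp [htt1]), Finset.card_singleton]
  have huniv : ∀ x : OK ⧸ Ideal.span {(2:OK)}, x = 0 ∨ x = 1 ∨ x = t ∨ x = t + 1 := by
    intro x
    have hx : x ∈ ({0,1,t,t+1} : Finset (OK ⧸ Ideal.span {(2:OK)})) := by
      rw [Finset.eq_univ_of_card _ (hs.trans hcard4.symm)]; exact Finset.mem_univ x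
    simpa using hx
  have htunit : t * (t + 1) = 1 := by linear_combination ht + t * h2R
  have hunit : ∀ x : OK ⧸ Ideal.span {(2:OK)}, x = 0 ∨ IsUnit x := by
    intro x
    rcases huniv x with h|h|h|h
    · exact Or.inl h
    · exact Or.inr (h ▸ isUnit_one)
    · exact Or.inr (h ▸ IsUnit.of_mul_eq_one _ htunit)
    · exact Or.inr (h ▸ IsUnit.of_mul_eq_one _ (by linear_combination htunit))
  letI : NoZeroDivisors (OK ⧸ Ideal.span {(2:OK)}) := ⟨by
    intro x y hxy
    rcases hunit x with h|h
    · exact Or.inl h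
    · rcases hunit y with h'|h'
      · exact Or.inr h'
      · exfalso
        have hu : IsUnit (x * y) := h.mul h'
        rw [hxy] at hu
        exact zero_ne_one (isUnit_zero_iff.mp hu)⟩
  exact NoZeroDivisors.to_isDomain _

lemma fermat_valuation_aux {R : Type*} [CommRing R] [IsDomain R]
    (hP : Prime (2 : R)) (p : ℕ) (hp11 : 11 ≤ p)
    (a b c : R)
    (hfermat : a ^ p + b ^ p + c ^ p = 0)
    (h2a : (2 : R) ∣ a) (h2bc : ¬ (2 : R) ∣ b * c)
    (A B C : R) (hA : A = a ^ p) (hB : B = b ^ p) (hC : C = c ^ p) :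
    ((2 : R) ^ 4 ∣ 16 * (A ^ 2 + A * B + B ^ 2) ∧
      ¬ (2 : R) ^ 5 ∣ 16 * (A ^ 2 + A * B + B ^ 2)) ∧
    ((2 : R) ^ 6 ∣ -32 * (A - B) * (B - C) * (C - A) ∧
      ¬ (2 : R) ^ 7 ∣ -32 * (A - B) * (B - C) * (C - A)) ∧
    (2 : R) ^ 26 ∣ 16 * (A * B * C) ^ 2 := by
  have h2ne : (2 : R) ≠ 0 := hP.ne_zero
  have h2b : ¬ (2:R) ∣ b := fun h => h2bc (h.mul_right c)
  have h2c : ¬ (2:R) ∣ c := fun h => h2bc (h.mul_left b)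
  have h2B : ¬ (2:R) ∣ B := fun h => h2b (hP.dvd_of_dvd_pow (hB ▸ h))
  have h2C : ¬ (2:R) ∣ C := fun h => h2c (hP.dvd_of_dvd_pow (hC ▸ h))
  obtain ⟨a', ha'⟩ := h2a
  have hAeq : A = 2 ^ p * a' ^ p := by rw [hA, ha', mul_pow]
  have hABC : A + B + C = 0 := by rw [hA, hB, hC]; exact hfermat
  have hppos : p ≠ 0 := by omega
  have hdvdA : (2:R) ∣ A := hAeq ▸ dvd_mul_of_dvd_left (dvd_pow_self 2 hppos) _
  obtain ⟨a₁, ha₁⟩ := hdvdA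
  have hp1ne : p - 1 ≠ 0 := by omega
  have hps : p - 1 + 1 = p := by omega
  have h2p : (2:R) ^ p = 2 * 2 ^ (p-1) := by
    conv_lhs => rw [← hps]
    rw [pow_succ]; ring
  have hBCw : B - C = 2 * (-(2 ^ (p-1) * a' ^ p) - C) := by
    have hBeq : B = -A - C := by linear_combination hABC
    rw [hBeq, hAeq, h2p]; ring
  have h2w : ¬ (2:R) ∣ (-(2 ^ (p-1) * a' ^ p) - C) := by
    intro hw
    apply h2C
    have he : C = -(2 ^ (p-1) * a' ^ p) - (-(2 ^ (p-1) * a' ^ p) - C) := by ring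
    rw [he]
    exact dvd_sub (dvd_neg.mpr (dvd_mul_of_dvd_left (dvd_pow_self 2 hp1ne) _)) hw
  have h2AB : ¬ (2:R) ∣ (A - B) := by
    intro h
    apply h2B
    have he : B = A - (A - B) := by ring
    rw [he]
    exact dvd_sub ⟨a₁, ha₁⟩ h
  have h2CA : ¬ (2:R) ∣ (C - A) := by
    intro h
    apply h2C
    have he : C = (C - A) + A := by ring
    rw [he]
    exact dvd_add h ⟨a₁, ha₁⟩
  have hE : -32 * (A - B) * (B - C) * (C - A)
      = 2 ^ 6 * (-((A - B) * ((-(2 ^ (p-1) * a' ^ p) - C) * (C - A)))) := by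
    rw [hBCw]; ring
  refine ⟨⟨⟨A ^ 2 + A * B + B ^ 2, by ring⟩, ?_⟩,
    ⟨⟨-((A - B) * ((-(2 ^ (p-1) * a' ^ p) - C) * (C - A))), hE⟩, ?_⟩, ?_⟩
  · intro h
    have h5 : (2:R) ^ 4 * 2 ∣ (2:R) ^ 4 * (A ^ 2 + A * B + B ^ 2) := by
      have e1 : (2:R) ^ 4 * (A ^ 2 + A * B + B ^ 2) = 16 * (A ^ 2 + A * B + B ^ 2) := by
        norm_num
      have e2 : (2:R) ^ 4 * 2 = 2 ^ 5 := by norm_num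
      rw [e1, e2]; exact h
    have hS : (2:R) ∣ A ^ 2 + A * B + B ^ 2 :=
      (mul_dvd_mul_iff_left (pow_ne_zero 4 h2ne)).mp h5
    have hB2 : (2:R) ∣ B ^ 2 := by
      have he : B ^ 2 = (A ^ 2 + A * B + B ^ 2) - A * (A + B) := by ring
      rw [he]
      exact dvd_sub hS (Dvd.dvd.mul_right ⟨a₁, ha₁⟩ _)
    exact h2B (hP.dvd_of_dvd_pow hB2)
  · intro h
    rw [hE] at h
    have h7 : (2:R) ^ 6 * 2 ∣
        (2:R) ^ 6 * (-((A - B) * ((-(2 ^ (p-1) * a' ^ p) - C) * (C - A)))) := by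
      rw [show (2:R) ^ 6 * 2 = 2 ^ 7 by ring]; exact h
    have hu : (2:R) ∣ (A - B) * ((-(2 ^ (p-1) * a' ^ p) - C) * (C - A)) :=
      dvd_neg.mp ((mul_dvd_mul_iff_left (pow_ne_zero 6 h2ne)).mp h7)
    rcases hP.2.2 _ _ hu with h1 | h1
    · exact h2AB h1
    · rcases hP.2.2 _ _ h1 with h2 | h2
      · exact h2w h2
      · exact h2CA h2
  · have h11A : (2:R) ^ 11 ∣ A := dvd_trans (pow_dvd_pow 2 hp11) ⟨a' ^ p, hAeq⟩
    obtain ⟨d, hd⟩ := h11A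
    exact ⟨d ^ 2 * B ^ 2 * C ^ 2, by rw [hd]; ring⟩

set_option maxHeartbeats 1000000 in
/-- **Lemma 3 (1), computation.** Let `p ≥ 11` be prime and `a, b, c` nonzero
coprime elements of `O_K` with `a^p + b^p + c^p = 0`, `2 ∣ a` and `2 ∤ b·c`.
With `A = a^p`, `B = b^p`, `C = c^p` and `v` the valuation attached to the prime
ideal `2·O_K` (so `v(x) = n` iff `2^n ∣ x` and `2^(n+1) ∤ x`), one has
`v(c₄) = 4`, `v(c₆) = 6` and `v(Δ) ≥ 26`, where `c₄ = 16(A² + AB + B²)`,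
`c₆ = -32(A - B)(B - C)(C - A)` and `Δ = 16(ABC)²`. -/
theorem valuations_at_P2_even_case (p : ℕ) (hp : p.Prime) (hp11 : 11 ≤ p)
    (a b c : OK) (ha : a ≠ 0) (hb : b ≠ 0) (hc : c ≠ 0)
    (hcop : ∀ d : OK, d ∣ a → d ∣ b → d ∣ c → IsUnit d)
    (hfermat : a ^ p + b ^ p + c ^ p = 0)
    (h2a : (2 : OK) ∣ a) (h2bc : ¬ (2 : OK) ∣ b * c)
    (A B C : OK) (hA : A = a ^ p) (hB : B = b ^ p) (hC : C = c ^ p) :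
    ((2 : OK) ^ 4 ∣ 16 * (A ^ 2 + A * B + B ^ 2) ∧
      ¬ (2 : OK) ^ 5 ∣ 16 * (A ^ 2 + A * B + B ^ 2)) ∧
    ((2 : OK) ^ 6 ∣ -32 * (A - B) * (B - C) * (C - A) ∧
      ¬ (2 : OK) ^ 7 ∣ -32 * (A - B) * (B - C) * (C - A)) ∧
    (2 : OK) ^ 26 ∣ 16 * (A * B * C) ^ 2 :=
  fermat_valuation_aux prime_two_OK p hp11 a b c hfermat h2a h2bc A B C hA hB hC
end

section
/- The resultant of the polynomials X^10 − 1 and (X+1)^10 − 1 in ℤ[X] equals −3 · 11^9 · 31^3; that is, W_10 = −3 · 11^9 · 31^3. -/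
open Polynomial

/-- The Sylvester matrix of two polynomials `f, g` over `ℤ`, of size
`(g.natDegree + f.natDegree) × (g.natDegree + f.natDegree)`: the first
`g.natDegree` rows carry the (shifted) coefficients of `f` and the remaining
`f.natDegree` rows carry the (shifted) coefficients of `g`. -/
noncomputable def sylvester (f g : Polynomial ℤ) :
    Matrix (Fin (g.natDegree + f.natDegree)) (Fin (g.natDegree + f.natDegree)) ℤ :=
  Matrix.of fun i j =>
    if (i : ℕ) < g.natDegree then
      if (i : ℕ) ≤ (j : ℕ) ∧ (j : ℕ) ≤ (i : ℕ) + f.natDegree then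
        f.coeff (f.natDegree + i - j)
      else 0
    else
      if (i : ℕ) - g.natDegree ≤ (j : ℕ) ∧ (j : ℕ) ≤ (i : ℕ) - g.natDegree + g.natDegree then
        g.coeff (g.natDegree + ((i : ℕ) - g.natDegree) - j)
      else 0

/-- The resultant of two polynomials over `ℤ`: the determinant of their Sylvester matrix. -/
noncomputable def resultant (f g : Polynomial ℤ) : ℤ := (_root_.sylvester f g).det

/-- `W n` is the resultant of the polynomials `X ^ n - 1` and `(X + 1) ^ n - 1` in `ℤ[X]`. -/
noncomputable def W (n : ℕ) : ℤ := _root_.resultant (X ^ n - 1) ((X + 1) ^ n - 1)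

/-- coefficient function of `X ^ 10 - 1` -/
def entf (k : ℕ) : ℤ := if k = 10 then 1 else if k = 0 then -1 else 0

/-- coefficient function of `(X + 1) ^ 10 - 1` -/
def entg (k : ℕ) : ℤ := if k = 0 then 0 else (Nat.choose 10 k : ℤ)

/-- Explicit form of the Sylvester-matrix entries for our two polynomials. -/
def SmatF : Matrix (Fin 20) (Fin 20) ℤ := Matrix.of fun i j =>
  if (i : ℕ) < 10 then
    if (i : ℕ) ≤ (j : ℕ) ∧ (j : ℕ) ≤ (i : ℕ) + 10 then entf (10 + (i : ℕ) - (j : ℕ)) else 0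
  else
    if (i : ℕ) - 10 ≤ (j : ℕ) ∧ (j : ℕ) ≤ (i : ℕ) - 10 + 10 then
      entg (10 + ((i : ℕ) - 10) - (j : ℕ))
    else 0

def Amat : Matrix (Fin 20) (Fin 20) ℤ :=
  !![1, 0, 0, 0, 0, 0, 0, 0, 0, 0, 0, 0, 0, 0, 0, 0, 0, 0, 0, 0;
     0, 1, 0, 0, 0, 0, 0, 0, 0, 0, 0, 0, 0, 0, 0, 0, 0, 0, 0, 0;
     0, 0, 1, 0, 0, 0, 0, 0, 0, 0, 0, 0, 0, 0, 0, 0, 0, 0, 0, 0;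
     0, 0, 0, 1, 0, 0, 0, 0, 0, 0, 0, 0, 0, 0, 0, 0, 0, 0, 0, 0;
     0, 0, 0, 0, 1, 0, 0, 0, 0, 0, 0, 0, 0, 0, 0, 0, 0, 0, 0, 0;
     0, 0, 0, 0, 0, 1, 0, 0, 0, 0, 0, 0, 0, 0, 0, 0, 0, 0, 0, 0;
     0, 0, 0, 0, 0, 0, 1, 0, 0, 0, 0, 0, 0, 0, 0, 0, 0, 0, 0, 0;
     0, 0, 0, 0, 0, 0, 0, 1, 0, 0, 0, 0, 0, 0, 0, 0, 0, 0, 0, 0;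
     0, 0, 0, 0, 0, 0, 0, 0, 1, 0, 0, 0, 0, 0, 0, 0, 0, 0, 0, 0;
     0, 0, 0, 0, 0, 0, 0, 0, 0, 1, 0, 0, 0, 0, 0, 0, 0, 0, 0, 0;
     (-1), (-10), (-45), (-120), (-210), (-252), (-210), (-120), (-45), (-10), 1, 0, 0, 0, 0, 0, 0, 0, 0, 0;
     10, 99, 440, 1155, 1980, 2310, 1848, 990, 330, 55, (-10), 1, 0, 0, 0, 0, 0, 0, 0, 0;
     (-55), (-990), (-6776), (-25410), (-59895), (-94380), (-101640), (-74052), (-34485), (-8470), 55, 440, (-99), 0, 0, 0, 0, 0, 0, 0;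
     8470, 50820, 67760, (-260876), (-1211210), (-2236080), (-2236080), (-1118040), (-55902), 186340, (-8470), 33880, (-25410), 6776, 0, 0, 0, 0, 0, 0;
     (-186340), (-838530), (-372680), 2608760, (-4919376), (-48168890), (-116835180), (-147581280), (-104536740), (-35460502), 186340, (-1024870), 2236080, (-1211210), 260876, 0, 0, 0, 0, 0;
     35460502, 186453135, 237477020, (-260316980), 49193760, 4727330003, 13301202090, 17857334880, 13098277830, 4576264165, (-35460502), 168151885, (-323273280), 181475195, (-48168890), 4919376, 0, 0, 0, 0;
     (-4576264165), (-35029558806), (-105831443630), (-148394001910), (-79717829235), (-47273300030), (-285697870909), (-597228644320), (-548368991940), (-213455384890), 4576264165, (-10733082844), 7230384645, 9927183640, (-17966849560), 13301202090, (-4727330003), 0, 0, 0;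
     213455384890, 1810526484195, 6527826714068, 12648219199990, 13420424924280, 6884117747705, 2856978709090, 7627999754727, 11332959166760, 6173925516220, (-213455384890), 324027364705, (-162608041068), 11275985765, (-273475871570), 601196940960, (-597228644320), 285697870909, 0, 0;
     (-6173925516220), (-54532314711270), (-210097718753285), (-458395242408004), (-611272995312870), (-495871332752840), (-229930397295115), (-76279997547270), (-70245619662581), (-57679687699480), 6173925516220, (-7206940450930), 4340475032685, (-1568249573396), (-57389718595), 3787721427270, (-9049452468980), 11332959166760, (-7627999754727), 0;
     57679687699480, 547957033145060, 2309247496825610, 5655699377818655, 8843944115407412, 9107210689978610, 6122286851530520, 2584256007821345, 702456196625810, 210736858987743, (-57679687699480), 28839843849740, (-2059988846410), (-11329938655255), 14007924155588, (-11329938655255), (-2059988846410), 28839843849740, (-57679687699480), 70245619662581]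

def Bmat : Matrix (Fin 20) (Fin 20) ℤ :=
  !![1, 0, 0, 0, 0, 0, 0, 0, 0, 0, (-1), 0, 0, 0, 0, 0, 0, 0, 0, 0;
     0, 1, 0, 0, 0, 0, 0, 0, 0, 0, 0, (-1), 0, 0, 0, 0, 0, 0, 0, 0;
     0, 0, 1, 0, 0, 0, 0, 0, 0, 0, 0, 0, (-1), 0, 0, 0, 0, 0, 0, 0;
     0, 0, 0, 1, 0, 0, 0, 0, 0, 0, 0, 0, 0, (-1), 0, 0, 0, 0, 0, 0;
     0, 0, 0, 0, 1, 0, 0, 0, 0, 0, 0, 0, 0, 0, (-1), 0, 0, 0, 0, 0;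
     0, 0, 0, 0, 0, 1, 0, 0, 0, 0, 0, 0, 0, 0, 0, (-1), 0, 0, 0, 0;
     0, 0, 0, 0, 0, 0, 1, 0, 0, 0, 0, 0, 0, 0, 0, 0, (-1), 0, 0, 0;
     0, 0, 0, 0, 0, 0, 0, 1, 0, 0, 0, 0, 0, 0, 0, 0, 0, (-1), 0, 0;
     0, 0, 0, 0, 0, 0, 0, 0, 1, 0, 0, 0, 0, 0, 0, 0, 0, 0, (-1), 0;
     0, 0, 0, 0, 0, 0, 0, 0, 0, 1, 0, 0, 0, 0, 0, 0, 0, 0, 0, (-1);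
     0, 0, 0, 0, 0, 0, 0, 0, 0, 0, 1, 10, 45, 120, 210, 252, 210, 120, 45, 10;
     0, 0, 0, 0, 0, 0, 0, 0, 0, 0, 0, (-99), (-440), (-1155), (-1980), (-2310), (-1848), (-990), (-330), (-55);
     0, 0, 0, 0, 0, 0, 0, 0, 0, 0, 0, 0, 6776, 25410, 59895, 94380, 101640, 74052, 34485, 8470;
     0, 0, 0, 0, 0, 0, 0, 0, 0, 0, 0, 0, 0, 260876, 1211210, 2236080, 2236080, 1118040, 55902, (-186340);
     0, 0, 0, 0, 0, 0, 0, 0, 0, 0, 0, 0, 0, 0, 4919376, 48168890, 116835180, 147581280, 104536740, 35460502;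
     0, 0, 0, 0, 0, 0, 0, 0, 0, 0, 0, 0, 0, 0, 0, (-4727330003), (-13301202090), (-17857334880), (-13098277830), (-4576264165);
     0, 0, 0, 0, 0, 0, 0, 0, 0, 0, 0, 0, 0, 0, 0, 0, 285697870909, 597228644320, 548368991940, 213455384890;
     0, 0, 0, 0, 0, 0, 0, 0, 0, 0, 0, 0, 0, 0, 0, 0, 0, (-7627999754727), (-11332959166760), (-6173925516220);
     0, 0, 0, 0, 0, 0, 0, 0, 0, 0, 0, 0, 0, 0, 0, 0, 0, 0, 70245619662581, 57679687699480;
     0, 0, 0, 0, 0, 0, 0, 0, 0, 0, 0, 0, 0, 0, 0, 0, 0, 0, 0, (-210736858987743)]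

def Smat : Matrix (Fin 20) (Fin 20) ℤ :=
  !![1, 0, 0, 0, 0, 0, 0, 0, 0, 0, (-1), 0, 0, 0, 0, 0, 0, 0, 0, 0;
     0, 1, 0, 0, 0, 0, 0, 0, 0, 0, 0, (-1), 0, 0, 0, 0, 0, 0, 0, 0;
     0, 0, 1, 0, 0, 0, 0, 0, 0, 0, 0, 0, (-1), 0, 0, 0, 0, 0, 0, 0;
     0, 0, 0, 1, 0, 0, 0, 0, 0, 0, 0, 0, 0, (-1), 0, 0, 0, 0, 0, 0;
     0, 0, 0, 0, 1, 0, 0, 0, 0, 0, 0, 0, 0, 0, (-1), 0, 0, 0, 0, 0;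
     0, 0, 0, 0, 0, 1, 0, 0, 0, 0, 0, 0, 0, 0, 0, (-1), 0, 0, 0, 0;
     0, 0, 0, 0, 0, 0, 1, 0, 0, 0, 0, 0, 0, 0, 0, 0, (-1), 0, 0, 0;
     0, 0, 0, 0, 0, 0, 0, 1, 0, 0, 0, 0, 0, 0, 0, 0, 0, (-1), 0, 0;
     0, 0, 0, 0, 0, 0, 0, 0, 1, 0, 0, 0, 0, 0, 0, 0, 0, 0, (-1), 0;
     0, 0, 0, 0, 0, 0, 0, 0, 0, 1, 0, 0, 0, 0, 0, 0, 0, 0, 0, (-1);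
     1, 10, 45, 120, 210, 252, 210, 120, 45, 10, 0, 0, 0, 0, 0, 0, 0, 0, 0, 0;
     0, 1, 10, 45, 120, 210, 252, 210, 120, 45, 10, 0, 0, 0, 0, 0, 0, 0, 0, 0;
     0, 0, 1, 10, 45, 120, 210, 252, 210, 120, 45, 10, 0, 0, 0, 0, 0, 0, 0, 0;
     0, 0, 0, 1, 10, 45, 120, 210, 252, 210, 120, 45, 10, 0, 0, 0, 0, 0, 0, 0;
     0, 0, 0, 0, 1, 10, 45, 120, 210, 252, 210, 120, 45, 10, 0, 0, 0, 0, 0, 0;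
     0, 0, 0, 0, 0, 1, 10, 45, 120, 210, 252, 210, 120, 45, 10, 0, 0, 0, 0, 0;
     0, 0, 0, 0, 0, 0, 1, 10, 45, 120, 210, 252, 210, 120, 45, 10, 0, 0, 0, 0;
     0, 0, 0, 0, 0, 0, 0, 1, 10, 45, 120, 210, 252, 210, 120, 45, 10, 0, 0, 0;
     0, 0, 0, 0, 0, 0, 0, 0, 1, 10, 45, 120, 210, 252, 210, 120, 45, 10, 0, 0;
     0, 0, 0, 0, 0, 0, 0, 0, 0, 1, 10, 45, 120, 210, 252, 210, 120, 45, 10, 0]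


set_option maxHeartbeats 4000000 in
lemma SmatF_eq : SmatF = Smat := by decide

lemma entf_coeff (k : ℕ) : ((X : ℤ[X]) ^ 10 - 1).coeff k = entf k := by
  simp only [coeff_sub, coeff_X_pow, coeff_one, entf]
  split_ifs <;> omega

lemma entg_coeff (k : ℕ) : (((X : ℤ[X]) + 1) ^ 10 - 1).coeff k = entg k := by
  simp only [coeff_sub, coeff_X_add_one_pow, coeff_one, entg]
  split_ifs with h <;> simp [h]

lemma f_deg : ((X : ℤ[X]) ^ 10 - 1).natDegree = 10 := by
  compute_degree!

lemma g_deg : (((X : ℤ[X]) + 1) ^ 10 - 1).natDegree = 10 := by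
  compute_degree!

set_option maxHeartbeats 4000000 in
lemma AS_eq : Amat * Smat = Bmat := by decide

lemma A_lower : Amat.BlockTriangular OrderDual.toDual := by
  have h : ∀ i j : Fin 20, i < j → Amat i j = 0 :=
    @of_decide_eq_true _ (@Fintype.decidableForallFintype _ _ (fun i => @Fintype.decidableForallFintype _ _ (fun j => instDecidableForall) _) _) (by decide)
  exact fun i j hij => h i j hij

lemma B_upper : Bmat.BlockTriangular id := by
  have h : ∀ i j : Fin 20, j < i → Bmat i j = 0 :=
    @of_decide_eq_true _ (@Fintype.decidableForallFintype _ _ (fun i => @Fintype.decidableForallFintype _ _ (fun j => instDecidableForall) _) _) (by decide)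
  exact fun i j hij => h i j hij

set_option maxHeartbeats 1000000 in
set_option maxRecDepth 100000 in
lemma A_det : Amat.det =
    -623025151409689722431785929077470068608642895517513561421714136576 := by
  rw [Matrix.det_of_lowerTriangular Amat A_lower]
  simp only [Amat, Fin.prod_univ_succ, Matrix.cons_val', Matrix.cons_val_zero,
    Matrix.cons_val_succ, Matrix.of_apply, Matrix.empty_val', Matrix.cons_val_fin_one,
    Fin.prod_univ_zero, mul_one]
  norm_num

set_option maxHeartbeats 1000000 in
set_option maxRecDepth 100000 in
lemma B_det : Bmat.det =
    131294363478441014989027841526336409792397353423089851453557447815577304611987968 := by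
  rw [Matrix.det_of_upperTriangular B_upper]
  simp only [Bmat, Fin.prod_univ_succ, Matrix.cons_val', Matrix.cons_val_zero,
    Matrix.cons_val_succ, Matrix.of_apply, Matrix.empty_val', Matrix.cons_val_fin_one,
    Fin.prod_univ_zero, mul_one]
  norm_num

lemma det_cancel {n : ℕ} {A S B : Matrix (Fin n) (Fin n) ℤ} {a b d : ℤ} (h : A * S = B)
    (hA : A.det = a) (hB : B.det = b) (ha : a ≠ 0) (hab : a * d = b) : S.det = d := by
  apply mul_left_cancel₀ ha
  rw [hab, ← hA, ← Matrix.det_mul, h, hB]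

lemma Smat_det : Smat.det = (-3 * 11 ^ 9 * 31 ^ 3 : ℤ) :=
  det_cancel AS_eq A_det B_det (by norm_num) (by norm_num)

/-- The resultant of `X ^ 10 - 1` and `(X + 1) ^ 10 - 1` in `ℤ[X]`. -/
theorem W_eq_10 : W 10 = (-3 * 11 ^ 9 * 31 ^ 3 : ℤ) := by
  unfold W _root_.resultant
  have hsum : (((X : ℤ[X]) + 1) ^ 10 - 1).natDegree + ((X : ℤ[X]) ^ 10 - 1).natDegree = 20 := by
    rw [f_deg, g_deg]
  rw [← Matrix.det_submatrix_equiv_self (finCongr hsum.symm)]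
  have hS : (_root_.sylvester ((X : ℤ[X]) ^ 10 - 1) (((X : ℤ[X]) + 1) ^ 10 - 1)).submatrix
      (finCongr hsum.symm) (finCongr hsum.symm) = SmatF := by
    ext i j
    simp only [Matrix.submatrix_apply, _root_.sylvester, SmatF, Matrix.of_apply, finCongr_apply,
      Fin.coe_cast, f_deg, g_deg, entf_coeff, entg_coeff]
  rw [hS, SmatF_eq, Smat_det]
end

section
/- The resultant of the polynomials X^8 − 1 and (X+1)^8 − 1 in ℤ[X] equals −3^7 · 5^3 · 17^3; that is, W_8 = −3^7 · 5^3 · 17^3. -/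
open Polynomial

/-! ### Auxiliary material for the computation of `W 8` -/

/-- Coefficients of `X ^ 8 - 1`. -/
def fc (k : ℕ) : ℤ := (if k = 8 then 1 else 0) - (if k = 0 then 1 else 0)

/-- Coefficients of `(X + 1) ^ 8 - 1`. -/
def gc (k : ℕ) : ℤ := (Nat.choose 8 k : ℤ) - (if k = 0 then 1 else 0)

/-- The concrete 16×16 Sylvester matrix of `X ^ 8 - 1` and `(X + 1) ^ 8 - 1`. -/
def M16 : Matrix (Fin 16) (Fin 16) ℤ :=
  Matrix.of fun i j =>
    if (i : ℕ) < 8 then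
      if (i : ℕ) ≤ (j : ℕ) ∧ (j : ℕ) ≤ (i : ℕ) + 8 then fc (8 + i - j) else 0
    else
      if (i : ℕ) - 8 ≤ (j : ℕ) ∧ (j : ℕ) ≤ (i : ℕ) - 8 + 8 then
        gc (8 + ((i : ℕ) - 8) - j)
      else 0

/-- An upper-triangular matrix of column operations eliminating `M16`. -/
def N16 : Matrix (Fin 16) (Fin 16) ℤ :=
  !![1, 0, 0, 0, 0, 0, 0, 0, 1, -8, -4, -104, 1182, 9592, -2124, -72;
    0, 1, 0, 0, 0, 0, 0, 0, 0, 1, -24, 300, -3800, -43458, 3272, 36;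
    0, 0, 1, 0, 0, 0, 0, 0, 0, 0, 7, -280, 4900, 72520, -1974, 8;
    0, 0, 0, 1, 0, 0, 0, 0, 0, 0, 0, 99, -2472, -37980, -1480, -30;
    0, 0, 0, 0, 1, 0, 0, 0, 0, 0, 0, 0, 435, 2952, 3636, 8;
    0, 0, 0, 0, 0, 1, 0, 0, 0, 0, 0, 0, 0, 4067, -3528, 36;
    0, 0, 0, 0, 0, 0, 1, 0, 0, 0, 0, 0, 0, 0, 2041, -72;
    0, 0, 0, 0, 0, 0, 0, 1, 0, 0, 0, 0, 0, 0, 0, 85;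
    0, 0, 0, 0, 0, 0, 0, 0, 1, -8, -4, -104, 1182, 9592, -2124, -72;
    0, 0, 0, 0, 0, 0, 0, 0, 0, 1, -24, 300, -3800, -43458, 3272, 36;
    0, 0, 0, 0, 0, 0, 0, 0, 0, 0, 7, -280, 4900, 72520, -1974, 8;
    0, 0, 0, 0, 0, 0, 0, 0, 0, 0, 0, 99, -2472, -37980, -1480, -30;
    0, 0, 0, 0, 0, 0, 0, 0, 0, 0, 0, 0, 435, 2952, 3636, 8;
    0, 0, 0, 0, 0, 0, 0, 0, 0, 0, 0, 0, 0, 4067, -3528, 36;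
    0, 0, 0, 0, 0, 0, 0, 0, 0, 0, 0, 0, 0, 0, 2041, -72;
    0, 0, 0, 0, 0, 0, 0, 0, 0, 0, 0, 0, 0, 0, 0, 85]

/-- The lower-triangular result of the column elimination: `M16 * N16 = L16`. -/
def L16 : Matrix (Fin 16) (Fin 16) ℤ :=
  !![1, 0, 0, 0, 0, 0, 0, 0, 0, 0, 0, 0, 0, 0, 0, 0;
    0, 1, 0, 0, 0, 0, 0, 0, 0, 0, 0, 0, 0, 0, 0, 0;
    0, 0, 1, 0, 0, 0, 0, 0, 0, 0, 0, 0, 0, 0, 0, 0;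
    0, 0, 0, 1, 0, 0, 0, 0, 0, 0, 0, 0, 0, 0, 0, 0;
    0, 0, 0, 0, 1, 0, 0, 0, 0, 0, 0, 0, 0, 0, 0, 0;
    0, 0, 0, 0, 0, 1, 0, 0, 0, 0, 0, 0, 0, 0, 0, 0;
    0, 0, 0, 0, 0, 0, 1, 0, 0, 0, 0, 0, 0, 0, 0, 0;
    0, 0, 0, 0, 0, 0, 0, 1, 0, 0, 0, 0, 0, 0, 0, 0;
    1, 8, 28, 56, 70, 56, 28, 8, 1, 0, 0, 0, 0, 0, 0, 0;
    0, 1, 8, 28, 56, 70, 56, 28, 8, -63, 0, 0, 0, 0, 0, 0;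
    0, 0, 1, 8, 28, 56, 70, 56, 28, -216, -297, 0, 0, 0, 0, 0;
    0, 0, 0, 1, 8, 28, 56, 70, 56, -420, -840, 435, 0, 0, 0, 0;
    0, 0, 0, 0, 1, 8, 28, 56, 70, -504, -1428, 2472, -12201, 0, 0, 0;
    0, 0, 0, 0, 0, 1, 8, 28, 56, -378, -1512, 2268, 8856, 520455, 0, 0;
    0, 0, 0, 0, 0, 0, 1, 8, 28, -168, -966, -168, 37044, 899640, -21675, 0;
    0, 0, 0, 0, 0, 0, 0, 1, 8, -36, -312, -1182, 28776, 541620, -18360, -255]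

lemma det_sylvester_cast {f g : Polynomial ℤ} {n : ℕ}
    (h : n = g.natDegree + f.natDegree) (M : Matrix (Fin n) (Fin n) ℤ)
    (hM : ∀ i j, _root_.sylvester f g (Fin.cast h i) (Fin.cast h j) = M i j) :
    (_root_.sylvester f g).det = M.det := by
  subst h
  have : _root_.sylvester f g = M := by
    ext i j
    exact hM i j
  rw [this]

lemma fc_spec (k : ℕ) : ((X : Polynomial ℤ) ^ 8 - 1).coeff k = fc k := by
  simp [fc, coeff_sub, coeff_X_pow, coeff_one]

lemma gc_spec (k : ℕ) : (((X : Polynomial ℤ) + 1) ^ 8 - 1).coeff k = gc k := by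
  simp [gc, coeff_sub, coeff_X_add_one_pow, coeff_one]

lemma hf_deg : ((X : Polynomial ℤ) ^ 8 - 1).natDegree = 8 := by
  simpa using (natDegree_X_pow_sub_C (n := 8) (r := (1 : ℤ)))

lemma hg_deg : (((X : Polynomial ℤ) + 1) ^ 8 - 1).natDegree = 8 := by
  have h1 : (((X : Polynomial ℤ) + 1) ^ 8 - 1)
      = ((X : Polynomial ℤ) + C 1) ^ 8 - C 1 := by simp
  rw [h1, natDegree_sub_C, natDegree_pow, natDegree_X_add_C]

set_option maxRecDepth 20000 in
lemma hMN : M16 * N16 = L16 := by decide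

set_option maxRecDepth 20000 in
lemma hN16tri : N16.BlockTriangular id := by
  show ∀ i j : Fin 16, j < i → N16 i j = 0
  exact @of_decide_eq_true _ (@Fintype.decidableForallFintype _ _
    (fun _ => @Fintype.decidableForallFintype _ _ (fun _ => inferInstance) _) _) rfl

set_option maxRecDepth 20000 in
lemma hL16tri : L16.BlockTriangular OrderDual.toDual := by
  show ∀ i j : Fin 16, i < j → L16 i j = 0
  exact @of_decide_eq_true _ (@Fintype.decidableForallFintype _ _
    (fun _ => @Fintype.decidableForallFintype _ _ (fun _ => inferInstance) _) _) rfl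

set_option maxRecDepth 20000 in
lemma hdetN16 : N16.det = 212695643385225 := by
  rw [Matrix.det_of_upperTriangular hN16tri]
  decide

set_option maxRecDepth 20000 in
lemma hdetL16 : L16.det = -285669684130771499934375 := by
  rw [Matrix.det_of_lowerTriangular L16 hL16tri]
  decide

lemma det_M16 : M16.det = (-3 ^ 7 * 5 ^ 3 * 17 ^ 3 : ℤ) := by
  have h : M16.det * N16.det = L16.det :=
    (Matrix.det_mul M16 N16).symm.trans (congrArg Matrix.det hMN)
  rw [hdetN16, hdetL16] at h
  have h0 : (212695643385225 : ℤ) ≠ 0 := by norm_num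
  refine mul_right_cancel₀ h0 ?_
  rw [h]
  norm_num

/-- The resultant of `X ^ 8 - 1` and `(X + 1) ^ 8 - 1` in `ℤ[X]`. -/
theorem W_eq_8 : W 8 = (-3 ^ 7 * 5 ^ 3 * 17 ^ 3 : ℤ) := by
  have h : (16 : ℕ) = (((X : Polynomial ℤ) + 1) ^ 8 - 1).natDegree
      + ((X : Polynomial ℤ) ^ 8 - 1).natDegree := by
    rw [hf_deg, hg_deg]
  have hM : ∀ i j, _root_.sylvester ((X : Polynomial ℤ) ^ 8 - 1) (((X : Polynomial ℤ) + 1) ^ 8 - 1)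
      (Fin.cast h i) (Fin.cast h j) = M16 i j := by
    intro i j
    simp only [_root_.sylvester, M16, Matrix.of_apply, Fin.coe_cast, hf_deg, hg_deg,
      fc_spec, gc_spec]
  have := det_sylvester_cast h M16 hM
  unfold W _root_.resultant
  rw [this, det_M16]
end
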